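/- Every triangle-free simple graph H on m vertices has at most e²·(1 + m/(2e))^m cycles in total. -/

import Mathlib

open SimpleGraph

/-- The number of cycles in a simple graph `G`, i.e. the number of distinct
subgraphs of `G` that are cycles. -/
noncomputable def cycleCount {V : Type*} (G : SimpleGraph V) : ℕ :=
  Nat.card {H : G.Subgraph // ∃ (u : V) (w : G.Walk u u), w.IsCycle ∧ w.toSubgraph = H}

namespace CycAux
set_option linter.unusedSectionVars false

section Analysis
open Real Finset


lemma key (n : ℕ) (hn : 1 ≤ n) : Real.exp 1 ^ 2 ≤ (1 + 1/(n:ℝ))^(2*n+1) := by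
  have hN : (1:ℝ) ≤ (n:ℝ) := by exact_mod_cast hn
  have hNpos : (0:ℝ) < n := by linarith
  set y : ℝ := 2 / (2*(n:ℝ)+1) with hy
  have h21 : (0:ℝ) < 2*(n:ℝ)+1 := by linarith
  have hypos : 0 < y := by positivity
  have hy1 : |y| ≤ 1 := by
    rw [abs_of_pos hypos, hy, div_le_one h21]; linarith
  have hb := Real.exp_bound hy1 (n := 3) (by norm_num)
  have hsum : ∑ m ∈ Finset.range 3, y^m / (m.factorial : ℝ) = 1 + y + y^2/2 := by
    simp [Finset.sum_range_succ, Nat.factorial]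
  rw [hsum] at hb
  have h1 : Real.exp y ≤ 1 + y + y^2/2 + y^3 * (2/9) := by
    have h2 := (abs_sub_le_iff.mp hb).1
    rw [abs_of_pos hypos] at h2
    norm_num [Nat.factorial] at h2
    linarith
  have h2 : 1 + y + y^2/2 + y^3*(2/9) ≤ 1 + 1/(n:ℝ) := by
    rw [hy, div_pow, div_pow]
    have hne : (2*(n:ℝ)+1) ≠ 0 := ne_of_gt h21
    have hne2 : ((2*(n:ℝ)+1))^2 ≠ 0 := pow_ne_zero _ hne
    have hne3 : ((2*(n:ℝ)+1))^3 ≠ 0 := pow_ne_zero _ hne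
    have hNne : (n:ℝ) ≠ 0 := ne_of_gt hNpos
    have e : (2:ℝ)/(2*(n:ℝ)+1) + 2^2/(2*(n:ℝ)+1)^2/2 + 2^3/(2*(n:ℝ)+1)^3*(2/9)
        = (18*(2*(n:ℝ)+1)^2+18*(2*(n:ℝ)+1)+16)/(9*(2*(n:ℝ)+1)^3) := by
      field_simp
      ring
    have goal2 : (18*(2*(n:ℝ)+1)^2+18*(2*(n:ℝ)+1)+16)/(9*(2*(n:ℝ)+1)^3) ≤ 1/(n:ℝ) := by
      rw [div_le_div_iff₀ (by positivity) hNpos]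
      nlinarith [hNpos]
    calc 1 + 2/(2*(n:ℝ)+1) + 2^2/(2*(n:ℝ)+1)^2/2 + 2^3/(2*(n:ℝ)+1)^3*(2/9)
        = 1 + ((2:ℝ)/(2*(n:ℝ)+1) + 2^2/(2*(n:ℝ)+1)^2/2 + 2^3/(2*(n:ℝ)+1)^3*(2/9)) := by ring
      _ ≤ 1 + 1/(n:ℝ) := by rw [e]; linarith [goal2]
  have h3 : Real.exp y ≤ 1 + 1/(n:ℝ) := h1.trans h2
  have h4 : Real.exp 1 ^ 2 = Real.exp y ^ (2*n+1) := by
    rw [← Real.exp_nat_mul, ← Real.exp_nat_mul]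
    congr 1
    rw [hy]
    push_cast
    field_simp
  rw [h4]
  exact pow_le_pow_left₀ (Real.exp_pos y).le h3 _

lemma fact_sq_le : ∀ t : ℕ, 1 ≤ t →
    ((t.factorial : ℝ))^2 ≤ Real.exp 1 ^ 2 * t * ((t:ℝ) / Real.exp 1)^(2*t) := by
  have hE : (0:ℝ) < Real.exp 1 := Real.exp_pos 1
  set E := Real.exp 1 with hEdef
  have hEne : E ≠ 0 := ne_of_gt hE
  intro t
  induction t with
  | zero => omega
  | succ t ih =>
    intro _
    rcases Nat.eq_zero_or_pos t with h1 | ht1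
    · subst h1
      have e0 : E^2 * ((0+1:ℕ):ℝ) * (((0+1:ℕ):ℝ)/E)^(2*(0+1)) = 1 := by
        push_cast
        field_simp
      rw [e0]
      norm_num [Nat.factorial]
    · have ih' := ih ht1
      have hT : (1:ℝ) ≤ (t:ℝ) := by exact_mod_cast ht1
      have hTpos : (0:ℝ) < (t:ℝ) := by linarith
      have hkey : E^2 * (t:ℝ)^(2*t+1) ≤ ((t:ℝ)+1)^(2*t+1) := by
        have h := key t ht1
        rw [← hEdef] at h
        have h2 : (1 + 1/(t:ℝ)) = ((t:ℝ)+1)/(t:ℝ) := by field_simp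
        rw [h2, div_pow] at h
        calc E^2 * (t:ℝ)^(2*t+1)
            ≤ (((t:ℝ)+1)^(2*t+1)/(t:ℝ)^(2*t+1)) * (t:ℝ)^(2*t+1) :=
              mul_le_mul_of_nonneg_right h (by positivity)
          _ = ((t:ℝ)+1)^(2*t+1) := div_mul_cancel₀ _ (by positivity)
      calc ((t+1).factorial:ℝ)^2 = ((t:ℝ)+1)^2 * ((t.factorial:ℝ))^2 := by
            push_cast [Nat.factorial_succ]; ring
        _ ≤ ((t:ℝ)+1)^2 * (E^2 * t * ((t:ℝ)/E)^(2*t)) :=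
            mul_le_mul_of_nonneg_left ih' (by positivity)
        _ ≤ E^2 * ((t:ℝ)+1) * (((t:ℝ)+1)/E)^(2*(t+1)) := by
            rw [div_pow, div_pow]
            have e1 : ((t:ℝ)+1)^2 * (E^2 * t * ((t:ℝ)^(2*t)/E^(2*t)))
                = (((t:ℝ)+1)^2 * (E^2 * (t:ℝ)^(2*t+1)))/E^(2*t) := by
              rw [pow_succ]
              field_simp
              ring
            have e2 : E^2 * ((t:ℝ)+1) * (((t:ℝ)+1)^(2*(t+1))/E^(2*(t+1)))
                = (((t:ℝ)+1)^2 * ((t:ℝ)+1)^(2*t+1))/E^(2*t) := by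
              have e3 : 2*(t+1) = (2*t+1)+1 := by ring
              rw [e3, pow_succ, pow_succ, pow_succ]
              field_simp
              ring
            rw [e1, e2]
            apply div_le_div_of_nonneg_right ?_ (by positivity)
            exact mul_le_mul_of_nonneg_left hkey (by positivity)
        _ = E ^ 2 * (↑(t+1)) * ((↑(t+1):ℝ)/E)^(2*(t+1)) := by push_cast; ring

lemma even_real (t : ℕ) (ht : 1 ≤ t) :
    ((t.factorial : ℝ)) * ((t-1).factorial : ℝ) ≤
      Real.exp 1 ^ 2 * (((2*t : ℕ):ℝ) / (2 * Real.exp 1))^(2*t) := by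
  have hE : (0:ℝ) < Real.exp 1 := Real.exp_pos 1
  set E := Real.exp 1 with hEdef
  have hT : (1:ℝ) ≤ (t:ℝ) := by exact_mod_cast ht
  have hTpos : (0:ℝ) < (t:ℝ) := by linarith
  have hbase : ((2*t : ℕ):ℝ) / (2 * E) = (t:ℝ)/E := by
    push_cast
    rw [mul_div_mul_left _ _ (by norm_num : (2:ℝ) ≠ 0)]
  rw [hbase]
  have hfac : (t.factorial : ℝ) = (t:ℝ) * ((t-1).factorial : ℝ) := by
    have e : t = (t-1) + 1 := by omega
    have e2 : (t:ℝ) = ((t-1:ℕ):ℝ) + 1 := by exact_mod_cast congrArg (Nat.cast : ℕ → ℝ) e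
    rw [e2]
    conv_lhs => rw [e, Nat.factorial_succ]
    push_cast
    ring
  have h := fact_sq_le t ht
  rw [← hEdef] at h
  rw [hfac] at h ⊢
  have h2 : (t:ℝ) * ((t:ℝ) * (((t-1).factorial:ℝ) * ((t-1).factorial:ℝ)))
      ≤ (t:ℝ) * (E^2 * ((t:ℝ)/E)^(2*t)) := by
    calc (t:ℝ) * ((t:ℝ) * (((t-1).factorial:ℝ) * ((t-1).factorial:ℝ)))
        = ((t:ℝ) * ((t-1).factorial:ℝ))^2 := by ring
      _ ≤ E^2 * t * ((t:ℝ)/E)^(2*t) := h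
      _ = (t:ℝ) * (E^2 * ((t:ℝ)/E)^(2*t)) := by ring
  have h3 := le_of_mul_le_mul_left h2 hTpos
  calc (t:ℝ) * ((t-1).factorial:ℝ) * ((t-1).factorial:ℝ)
      = (t:ℝ) * (((t-1).factorial:ℝ) * ((t-1).factorial:ℝ)) := by ring
    _ ≤ E^2 * ((t:ℝ)/E)^(2*t) := by
        have := h3
        linarith [h3]

lemma odd_real (t : ℕ) (ht : 1 ≤ t) :
    ((t.factorial : ℝ))^2 ≤
      Real.exp 1 ^ 2 * (((2*t+1 : ℕ):ℝ) / (2 * Real.exp 1))^(2*t+1) := by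
  have hE : (0:ℝ) < Real.exp 1 := Real.exp_pos 1
  set E := Real.exp 1 with hEdef
  have hEne : E ≠ 0 := ne_of_gt hE
  have hT : (1:ℝ) ≤ (t:ℝ) := by exact_mod_cast ht
  have hTpos : (0:ℝ) < (t:ℝ) := by linarith
  -- step 1 : E ≤ (1 + 1/(2t))^(2t+1)
  have hkey2 := key (2*t) (by omega)
  rw [← hEdef] at hkey2
  have hEx : E ≤ (1 + 1/((2*t:ℕ):ℝ))^(2*t+1) := by
    have hxpos : (0:ℝ) < (1 + 1/((2*t:ℕ):ℝ)) := by
      push_cast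
      positivity
    have hsq : E^2 ≤ ((1 + 1/((2*t:ℕ):ℝ))^(2*t+1))^2 := by
      rw [← pow_mul]
      calc E^2 ≤ (1 + 1/((2*t:ℕ):ℝ))^(2*(2*t)+1) := hkey2
        _ ≤ (1 + 1/((2*t:ℕ):ℝ))^((2*t+1)*2) := by
            apply pow_le_pow_right₀ ?_ (by omega)
            push_cast
            have : (0:ℝ) < (t:ℝ)*2 := by linarith
            rw [le_add_iff_nonneg_right]
            positivity
    nlinarith [pow_pos hxpos (2*t+1), hE]
  -- step 2 : E * (2t)^(2t+1) ≤ (2t+1)^(2t+1)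
  have h2t : (0:ℝ) < ((2*t:ℕ):ℝ) := by push_cast; linarith
  have hstep : E * ((2*t:ℕ):ℝ)^(2*t+1) ≤ ((2*t+1:ℕ):ℝ)^(2*t+1) := by
    have e1 : (1 + 1/((2*t:ℕ):ℝ)) = ((2*t+1:ℕ):ℝ)/((2*t:ℕ):ℝ) := by
      push_cast
      field_simp
    rw [e1, div_pow] at hEx
    calc E * ((2*t:ℕ):ℝ)^(2*t+1)
        ≤ (((2*t+1:ℕ):ℝ)^(2*t+1)/((2*t:ℕ):ℝ)^(2*t+1)) * ((2*t:ℕ):ℝ)^(2*t+1) :=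
          mul_le_mul_of_nonneg_right hEx (by positivity)
      _ = ((2*t+1:ℕ):ℝ)^(2*t+1) := div_mul_cancel₀ _ (by positivity)
  -- step 3 : E^2 * t * (t/E)^(2t) ≤ E^2*((2t+1)/(2E))^(2t+1)
  have hmain : E^2 * (t:ℝ) * ((t:ℝ)/E)^(2*t) ≤ E^2 * (((2*t+1:ℕ):ℝ)/(2*E))^(2*t+1) := by
    rw [div_pow, div_pow]
    have e2 : E^2 * (t:ℝ) * ((t:ℝ)^(2*t)/E^(2*t))
        = E^2 * ((E * ((2*t:ℕ):ℝ)^(2*t+1)) / (2*E)^(2*t+1)) := by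
      rw [mul_pow]
      push_cast
      rw [mul_pow, pow_succ]
      field_simp
      ring
    have e3 : E^2 * (((2*t+1:ℕ):ℝ)^(2*t+1)/(2*E)^(2*t+1))
        = E^2 * ((((2*t+1:ℕ):ℝ)^(2*t+1)) / (2*E)^(2*t+1)) := by ring
    rw [e2, e3]
    apply mul_le_mul_of_nonneg_left ?_ (by positivity)
    apply div_le_div_of_nonneg_right hstep (by positivity)
  exact (fact_sq_le t ht).trans (by rw [← hEdef] at *; exact hmain)

end Analysis

section Walks
open Finset
variable {V : Type} [Fintype V] {H : SimpleGraph V}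

lemma walk_eq_of_support_eq : ∀ {u v : V} (p q : H.Walk u v), p.support = q.support → p = q := by
  intro u v p
  induction p with
  | nil =>
    intro q h
    cases q with
    | nil => rfl
    | cons h' q' =>
      rw [Walk.support_nil, Walk.support_cons] at h
      have := q'.support_ne_nil
      simp at h
  | cons hadj p' ih =>
    intro q h
    cases q with
    | nil =>
      rw [Walk.support_nil, Walk.support_cons] at h
      have := p'.support_ne_nil
      simp at h
    | cons hadj' q' =>
      rw [Walk.support_cons, Walk.support_cons] at h
      have h2 : p'.support = q'.support := List.cons_injective h
      have hbc := congrArg List.head? h2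
      rw [p'.support_eq_cons, q'.support_eq_cons, List.head?_cons, List.head?_cons,
        Option.some_inj] at hbc
      subst hbc
      rw [ih q' h2]

end Walks

section Counting
open Finset
variable {V : Type} [Fintype V] [DecidableEq V] [Inhabited V]


open Classical in
noncomputable def Lset (H : SimpleGraph V) (S : Finset V) (j : ℕ) (a : V) : Finset (List V) :=
  ((S.powersetCard j).biUnion fun T => T.toList.permutations.toFinset).filter
    (fun l => l.Chain' H.Adj ∧ l.getLast? = some a)

lemma mem_Lset {H : SimpleGraph V} {S : Finset V} {j : ℕ} {a : V} {l : List V} :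
    l ∈ Lset H S j a ↔
      l.Nodup ∧ l.length = j ∧ l.toFinset ⊆ S ∧ l.Chain' H.Adj ∧ l.getLast? = some a := by
  classical
  simp only [Lset, Finset.mem_filter, Finset.mem_biUnion, Finset.mem_powersetCard,
    List.mem_toFinset, List.mem_permutations]
  constructor
  · rintro ⟨⟨T, ⟨hTS, hTc⟩, hperm⟩, hc, hl⟩
    have hfin : l.toFinset = T := by
      ext x
      rw [List.mem_toFinset, hperm.mem_iff, Finset.mem_toList]
    have hnd : l.Nodup := hperm.nodup_iff.mpr T.nodup_toList
    exact ⟨hnd, by rw [hperm.length_eq, Finset.length_toList, hTc], hfin ▸ hTS, hc, hl⟩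
  · rintro ⟨hnd, hlen, hsub, hc, hl⟩
    exact ⟨⟨l.toFinset, ⟨hsub, by rw [List.toFinset_card_of_nodup hnd, hlen]⟩,
      (List.toFinset_toList hnd).symm⟩, hc, hl⟩

lemma getLast?_cons_of_ne_nil {l : List V} (h : l ≠ []) (y : V) :
    (y :: l).getLast? = l.getLast? := by
  cases l with
  | nil => exact absurd rfl h
  | cons b t => exact List.getLast?_cons_cons ..

lemma Lset_one_card (H : SimpleGraph V) (S : Finset V) (a : V) :
    (Lset H S 1 a).card ≤ 1 := by
  classical
  refine Finset.card_le_one.mpr fun l hl l' hl' => ?_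
  rw [mem_Lset] at hl hl'
  obtain ⟨-, hlen, -, -, hl5⟩ := hl
  obtain ⟨-, hlen', -, -, hl5'⟩ := hl'
  match l, hlen with
  | [b], _ =>
  match l', hlen' with
  | [c], _ =>
  simp only [List.getLast?_singleton, Option.some_inj] at hl5 hl5'
  rw [hl5, hl5']

lemma Lset_card_step_one (H : SimpleGraph V) (S : Finset V) (a : V) {j : ℕ} (hj : 1 ≤ j) :
    (Lset H S (j+1) a).card ≤ (S.card - j) * (Lset H S j a).card := by
  classical
  refine Finset.card_le_mul_card_image_of_maps_to (f := fun l => l.drop 1) ?_ _ ?_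
  · intro l hl
    rw [mem_Lset] at hl
    obtain ⟨hnd, hlen, hsub, hc, hlast⟩ := hl
    match l, hlen with
    | y :: l', hlen =>
    have hne : l' ≠ [] := by
      intro h; rw [h] at hlen; simp at hlen; omega
    rw [mem_Lset]
    simp only [List.drop_one, List.tail_cons]
    refine ⟨(List.nodup_cons.mp hnd).2, by simpa using hlen, ?_, hc.tail, ?_⟩
    · refine subset_trans (fun x hx => ?_) hsub
      simp only [List.mem_toFinset] at hx ⊢
      exact List.mem_cons_of_mem _ hx
    · rw [← getLast?_cons_of_ne_nil hne y]; exact hlast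
  · intro l' hl'
    rw [mem_Lset] at hl'
    obtain ⟨hnd', hlen', hsub', hc', hlast'⟩ := hl'
    have hcard : (S \ l'.toFinset).card = S.card - j := by
      rw [Finset.card_sdiff_of_subset hsub', List.toFinset_card_of_nodup hnd', hlen']
    rw [← hcard]
    refine Finset.card_le_card_of_injOn (fun l => l.headI) ?_ ?_
    · intro l hl
      simp only [Finset.mem_coe, Finset.mem_filter] at hl
      obtain ⟨hl, hdrop⟩ := hl
      rw [mem_Lset] at hl
      obtain ⟨hnd, hlen, hsub, hc, hlast⟩ := hl
      match l, hlen with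
      | y :: l₀, _ =>
      have : l₀ = l' := by simpa using hdrop
      subst this
      simp only [List.headI_cons, Finset.mem_coe, Finset.mem_sdiff, List.mem_toFinset]
      exact ⟨hsub (by simp), (List.nodup_cons.mp hnd).1⟩
    · intro l₁ h₁ l₂ h₂ he
      simp only [Finset.mem_coe, Finset.mem_filter] at h₁ h₂
      obtain ⟨hm₁, hd₁⟩ := h₁
      obtain ⟨hm₂, hd₂⟩ := h₂
      rw [mem_Lset] at hm₁ hm₂
      match l₁, hm₁.2.1 with
      | y₁ :: t₁, _ =>
      match l₂, hm₂.2.1 with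
      | y₂ :: t₂, _ =>
      have e₁ : t₁ = l' := by simpa using hd₁
      have e₂ : t₂ = l' := by simpa using hd₂
      simp only [List.headI_cons] at he
      rw [he, e₁, e₂]

lemma Lset_card_step_two {H : SimpleGraph V} (htf : H.CliqueFree 3) (S : Finset V) (a : V)
    {j : ℕ} (hj : 1 ≤ j) :
    (Lset H S (j+2) a).card ≤ ((S.card - j)^2 / 4) * (Lset H S j a).card := by
  classical
  refine Finset.card_le_mul_card_image_of_maps_to (f := fun l => l.drop 2) ?_ _ ?_
  · intro l hl
    rw [mem_Lset] at hl
    obtain ⟨hnd, hlen, hsub, hc, hlast⟩ := hl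
    match l, hlen with
    | z :: y :: l', hlen =>
    have hne : l' ≠ [] := by
      intro h; rw [h] at hlen; simp at hlen; omega
    rw [mem_Lset]
    simp only [List.drop_succ_cons, List.drop_zero]
    refine ⟨((List.nodup_cons.mp hnd).2.sublist (List.sublist_cons_self _ _)), by simpa using hlen,
      ?_, (List.isChain_cons_cons.mp hc).2.tail, ?_⟩
    · refine subset_trans (fun x hx => ?_) hsub
      simp only [List.mem_toFinset] at hx ⊢
      exact List.mem_cons_of_mem _ (List.mem_cons_of_mem _ hx)
    · rw [← getLast?_cons_of_ne_nil hne y, ← getLast?_cons_of_ne_nil (List.cons_ne_nil y l') z]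
      exact hlast
  · intro l' hl'
    rw [mem_Lset] at hl'
    obtain ⟨hnd', hlen', hsub', hc', hlast'⟩ := hl'
    match l', hlen' with
    | x :: l'', hlen' =>
    set R : Finset V := S \ (x :: l'').toFinset with hR
    have hcardR : R.card = S.card - j := by
      rw [hR, Finset.card_sdiff_of_subset hsub', List.toFinset_card_of_nodup hnd', hlen']
    set AA : Finset V := R.filter (fun b => H.Adj x b) with hAA
    set BB : Finset V := R.filter (fun b => ¬ H.Adj x b) with hBB
    have hab : AA.card + BB.card = R.card := Finset.card_filter_add_card_filter_not _
    have hprod : BB.card * AA.card ≤ (S.card - j)^2 / 4 := by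
      rw [Nat.le_div_iff_mul_le (by norm_num), ← hcardR, ← hab]
      nlinarith [two_mul_le_add_sq AA.card BB.card]
    refine le_trans (le_trans ?_ (Finset.card_product BB AA).le) hprod
    refine Finset.card_le_card_of_injOn (fun l => (l.headI, l.tail.headI)) ?_ ?_
    · intro l hl
      simp only [Finset.mem_coe, Finset.mem_filter] at hl
      obtain ⟨hl, hdrop⟩ := hl
      rw [mem_Lset] at hl
      obtain ⟨hnd, hlen, hsub, hc, hlast⟩ := hl
      match l, hlen with
      | z :: y :: l₀, _ =>
      have : l₀ = x :: l'' := by simpa using hdrop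
      subst this
      simp only [List.headI_cons, List.tail_cons, Finset.mem_coe, Finset.mem_product]
      have hzy := List.isChain_cons_cons.mp hc
      have hyx := (List.isChain_cons_cons.mp hzy.2).1
      have hadjzy : H.Adj z y := hzy.1
      have hadjyx : H.Adj y x := hyx
      have hznl : z ∉ x :: l'' := fun hmem => (List.nodup_cons.mp hnd).1 (List.mem_cons_of_mem _ hmem)
      have hynl : y ∉ x :: l'' := (List.nodup_cons.mp (List.nodup_cons.mp hnd).2).1
      have hzS : z ∈ S := hsub (by simp)
      have hyS : y ∈ S := hsub (by simp)
      constructor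
      · -- z ∈ BB
        rw [hBB, Finset.mem_filter, hR, Finset.mem_sdiff, List.mem_toFinset]
        refine ⟨⟨hzS, hznl⟩, fun hadjxz => ?_⟩
        have hxy : x ≠ y := fun h => (h ▸ hynl) (List.mem_cons_self)
        have hxz : x ≠ z := fun h => (h ▸ hznl) (List.mem_cons_self)
        have hyz : y ≠ z := fun h => (List.nodup_cons.mp hnd).1 (h ▸ List.mem_cons_self)
        exact htf {x, y, z} (SimpleGraph.is3Clique_triple_iff.mpr ⟨hadjyx.symm, hadjxz, hadjzy.symm⟩)
      · -- y ∈ AA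
        rw [hAA, Finset.mem_filter, hR, Finset.mem_sdiff, List.mem_toFinset]
        exact ⟨⟨hyS, hynl⟩, hadjyx.symm⟩
    · intro l₁ h₁ l₂ h₂ he
      simp only [Finset.mem_coe, Finset.mem_filter] at h₁ h₂
      obtain ⟨hm₁, hd₁⟩ := h₁
      obtain ⟨hm₂, hd₂⟩ := h₂
      rw [mem_Lset] at hm₁ hm₂
      match l₁, hm₁.2.1 with
      | z₁ :: y₁ :: t₁, _ =>
      match l₂, hm₂.2.1 with
      | z₂ :: y₂ :: t₂, _ =>
      have e₁ : t₁ = x :: l'' := by simpa using hd₁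
      have e₂ : t₂ = x :: l'' := by simpa using hd₂
      simp only [List.headI_cons, List.tail_cons, Prod.mk.injEq] at he
      rw [he.1, he.2, e₁, e₂]

def rfun (k : ℕ) : ℕ → ℕ
  | 0 => 1
  | (i+1) => ((k - (2*i+1))^2 / 4) * rfun k i

lemma Lset_odd_card {H : SimpleGraph V} (htf : H.CliqueFree 3) (S : Finset V) (a : V) :
    ∀ i : ℕ, (Lset H S (2*i+1) a).card ≤ rfun S.card i := by
  intro i
  induction i with
  | zero => simpa [rfun] using Lset_one_card H S a
  | succ i ih =>
    have h2 : 2*(i+1)+1 = (2*i+1) + 2 := by ring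
    rw [h2, rfun]
    exact le_trans (Lset_card_step_two htf S a (by omega))
      (Nat.mul_le_mul_left _ ih)

lemma rfun_odd (t : ℕ) : ∀ i, i ≤ t → rfun (2*t+1) i * ((t-i).factorial)^2 = (t.factorial)^2 := by
  intro i
  induction i with
  | zero => simp [rfun]
  | succ i ih =>
    intro hit
    have hd : 2*t+1 - (2*i+1) = 2*(t-i) := by omega
    have hsq : (2*(t-i))^2 / 4 = (t-i)^2 := by
      have h4 : (2*(t-i))^2 = 4 * (t-i)^2 := by ring
      rw [h4, Nat.mul_div_cancel_left _ (by norm_num)]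
    have hti : t - i = (t - (i+1)) + 1 := by omega
    rw [rfun, hd, hsq, ← ih (by omega), hti]
    simp only [Nat.factorial_succ]
    ring

lemma rfun_even (t : ℕ) (ht : 1 ≤ t) :
    ∀ i, i ≤ t - 1 →
      rfun (2*t) i * ((t-i).factorial * (t-1-i).factorial) = t.factorial * (t-1).factorial := by
  intro i
  induction i with
  | zero => simp [rfun]
  | succ i ih =>
    intro hit
    have hd : 2*t - (2*i+1) = 2*(t-i) - 1 := by omega
    have h1 : 1 ≤ t - i := by omega
    obtain ⟨c, hc⟩ := Nat.exists_eq_add_of_le h1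
    have h2 : t - 1 - i = c := by omega
    have h3 : 2*(t-i) - 1 = 2*c+1 := by omega
    have hsq : (2*(t-i) - 1)^2 / 4 = (t-i) * (t-1-i) := by
      rw [h3, hc, h2]
      have h5 : (2*c+1)^2 = 4*((1+c)*c)+1 := by ring
      rw [h5]
      omega
    have e1 : t - i = (t - (i+1)) + 1 := by omega
    have e2 : t - 1 - i = (t - 1 - (i+1)) + 1 := by omega
    rw [rfun, hd, hsq, ← ih (by omega), e1, e2]
    simp only [Nat.factorial_succ]
    ring

lemma Lset_card_odd {H : SimpleGraph V} (htf : H.CliqueFree 3) {S : Finset V} (a : V)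
    {t : ℕ} (hS : S.card = 2*t+1) :
    (Lset H S (2*t+1) a).card ≤ (t.factorial)^2 := by
  have h := Lset_odd_card htf S a t
  rw [hS] at h
  have h2 := rfun_odd t t le_rfl
  exact h.trans (le_of_eq (by simpa using h2))

lemma Lset_card_even {H : SimpleGraph V} (htf : H.CliqueFree 3) {S : Finset V} (a : V)
    {t : ℕ} (ht : 1 ≤ t) (hS : S.card = 2*t) :
    (Lset H S (2*t) a).card ≤ t.factorial * (t-1).factorial := by
  have e : 2*t = (2*(t-1)+1) + 1 := by omega
  have h1 : (Lset H S (2*t) a).card ≤ (S.card - (2*(t-1)+1)) * (Lset H S (2*(t-1)+1) a).card := by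
    rw [e]; exact Lset_card_step_one H S a (by omega)
  have hfac : S.card - (2*(t-1)+1) = 1 := by omega
  rw [hfac, one_mul] at h1
  refine h1.trans ((Lset_odd_card htf S a (t-1)).trans (le_of_eq ?_))
  have h2 := rfun_even t ht (t-1) le_rfl
  rw [hS]
  have h3 : t - (t-1) = 1 := by omega
  simpa [h3] using h2

end Counting

end CycAux

section Main
open Finset

theorem stmt_19 (m : ℕ) {V : Type} [Fintype V] (H : SimpleGraph V)
    (hcard : Fintype.card V = m) (htf : H.CliqueFree 3) :
    (cycleCount H : ℝ) ≤ Real.exp 1 ^ 2 * (1 + (m : ℝ) / (2 * Real.exp 1)) ^ m := by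
  classical
  have hE : (0:ℝ) < Real.exp 1 := Real.exp_pos 1
  have hE2 : (2:ℝ) ≤ Real.exp 1 := by linarith [Real.add_one_le_exp 1]
  have hRHSpos : (0:ℝ) ≤ Real.exp 1 ^2 * (1 + (m:ℝ)/(2*Real.exp 1))^m := by positivity
  cases isEmpty_or_nonempty V with
  | inl hempty =>
      have h0 : cycleCount H = 0 := by
        rw [cycleCount, Nat.card_eq_zero]
        left
        exact ⟨fun x => by obtain ⟨u, -⟩ := x.2; exact hempty.false u⟩
      rw [h0]
      exact_mod_cast hRHSpos
  | inr hnev =>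
      letI : Inhabited V := Classical.inhabited_of_nonempty hnev
      letI : LinearOrder V := LinearOrder.lift' (Fintype.equivFin V) (Equiv.injective _)
      have hm1 : 1 ≤ m := by
        rw [← hcard]
        exact Fintype.card_pos
      set G : Finset (List V) := Finset.univ.powerset.biUnion
        (fun S => if h : S.Nonempty then CycAux.Lset H S S.card (S.min' h) else ∅) with hG
      have hdata : ∀ x : {H' : H.Subgraph // ∃ (u : V) (w : H.Walk u u), w.IsCycle ∧ w.toSubgraph = H'},
          ∃ L : List V, L ∈ G ∧ ∃ (c : V) (w' : H.Walk c c), w'.toSubgraph = x.1 ∧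
            w'.support = c :: L ∧ L.getLast? = some c := by
        rintro ⟨Hx, hx⟩
        obtain ⟨u, w, hcyc, hsub⟩ := hx
        have hu : u ∈ w.support.toFinset := by simp [Walk.start_mem_support]
        have hne0 : w.support.toFinset.Nonempty := ⟨u, hu⟩
        set S0 := w.support.toFinset with hS0
        set c := S0.min' hne0 with hc
        have hcmem : c ∈ w.support := List.mem_toFinset.mp (S0.min'_mem hne0)
        set w' := w.rotate c hcmem with hw'
        have hcyc' : w'.IsCycle := hcyc.rotate hcmem
        have hts : w'.toSubgraph = w.toSubgraph := w.toSubgraph_rotate hcmem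
        set L := w'.support.tail with hL
        have hsupp : w'.support = c :: L := w'.support_eq_cons
        have hmemiff : ∀ v, v ∈ w'.support ↔ v ∈ w.support := by
          intro v
          rw [← Walk.mem_verts_toSubgraph, ← Walk.mem_verts_toSubgraph, hts]
        have hset : w'.support.toFinset = S0 := by
          ext v
          rw [hS0, List.mem_toFinset, List.mem_toFinset]
          exact hmemiff v
        have hlen3 : 3 ≤ w'.length := hcyc'.three_le_length
        have hLlen : L.length = w'.length := by
          have h := w'.length_support
          rw [hsupp] at h
          simpa using h
        have hLne : L ≠ [] := by
          intro h
          rw [h] at hLlen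
          simp at hLlen
          omega
        have hgl : L.getLast? = some c := by
          rw [← CycAux.getLast?_cons_of_ne_nil hLne c, ← hsupp,
            List.getLast?_eq_getLast_of_ne_nil w'.support_ne_nil]
          congr 1
          exact w'.getLast_support
        have hcL : c ∈ L := by
          have h := List.mem_getLast?_eq_getLast (l := L) (x := c) (by rw [hgl]; rfl)
          obtain ⟨hh, he⟩ := h
          rw [he]
          exact List.getLast_mem hh
        have hLfin : L.toFinset = S0 := by
          rw [← hset, hsupp, List.toFinset_cons, Finset.insert_eq_self.mpr
            (List.mem_toFinset.mpr hcL)]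
        have hnodup : L.Nodup := hcyc'.support_nodup
        have hchain : L.Chain' H.Adj := by
          have h := w'.isChain_adj_support
          rw [hsupp] at h
          exact h.tail
        have hmem : L ∈ CycAux.Lset H S0 S0.card c := by
          rw [CycAux.mem_Lset]
          refine ⟨hnodup, ?_, by rw [hLfin], hchain, hgl⟩
          rw [← hLfin, List.toFinset_card_of_nodup hnodup]
        refine ⟨L, ?_, c, w', hts.trans hsub, hsupp, hgl⟩
        rw [hG]
        refine Finset.mem_biUnion.mpr ⟨S0, Finset.mem_powerset.mpr (Finset.subset_univ _), ?_⟩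
        rw [dif_pos hne0]
        exact hmem
      choose Φ hΦG hΦw using hdata
      have hinj : Function.Injective Φ := by
        intro x y hxy
        obtain ⟨cx, wx, hx1, hx2, hx3⟩ := hΦw x
        obtain ⟨cy, wy, hy1, hy2, hy3⟩ := hΦw y
        rw [hxy] at hx3
        have hcc : cx = cy := Option.some_injective _ (hx3.symm.trans hy3)
        subst hcc
        have hss : wx.support = wy.support := by rw [hx2, hy2, hxy]
        have hww : wx = wy := CycAux.walk_eq_of_support_eq wx wy hss
        apply Subtype.ext
        rw [← hx1, ← hy1, hww]
      -- cardinality chain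
      have hcount : (cycleCount H : ℝ) ≤ (G.card : ℝ) := by
        have h1 : cycleCount H ≤ Nat.card {l : List V // l ∈ G} := by
          rw [cycleCount]
          exact Nat.card_le_card_of_injective
            (fun x => (⟨Φ x, hΦG x⟩ : {l : List V // l ∈ G}))
            (fun x y hxy => hinj (congrArg Subtype.val hxy))
        have h2 : Nat.card {l : List V // l ∈ G} = G.card := by
          simp [Nat.card_eq_fintype_card]
        rw [h2] at h1
        exact_mod_cast h1
      -- per-S bound
      have hperS : ∀ S ∈ Finset.univ.powerset,
          (((if h : S.Nonempty then CycAux.Lset H S S.card (S.min' h) else ∅) :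
            Finset (List V)).card : ℝ)
          ≤ Real.exp 1 ^ 2 * ((m:ℝ)/(2*Real.exp 1))^(S.card) := by
        intro S _
        by_cases hSne : S.Nonempty
        · rw [dif_pos hSne]
          have hk1 : 1 ≤ S.card := Finset.card_pos.mpr hSne
          have hkm : S.card ≤ m := by
            rw [← hcard]
            exact le_trans (Finset.card_le_card (Finset.subset_univ S)) (le_of_eq rfl)
          have hmono : Real.exp 1 ^ 2 * ((S.card:ℝ)/(2*Real.exp 1))^(S.card)
              ≤ Real.exp 1 ^ 2 * ((m:ℝ)/(2*Real.exp 1))^(S.card) := by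
            apply mul_le_mul_of_nonneg_left ?_ (by positivity)
            apply pow_le_pow_left₀ (by positivity) ?_ _
            apply div_le_div_of_nonneg_right ?_ (by positivity)
            exact_mod_cast hkm
          refine le_trans ?_ hmono
          rcases Nat.even_or_odd S.card with he | ho
          · obtain ⟨t, ht⟩ := he
            have ht' : S.card = 2*t := by omega
            have ht1 : 1 ≤ t := by omega
            rw [ht']
            have h1 := CycAux.Lset_card_even (a := S.min' hSne) htf ht1 ht'
            have h2 := CycAux.even_real t ht1
            calc ((CycAux.Lset H S (2*t) (S.min' hSne)).card : ℝ)
                ≤ ((t.factorial * (t-1).factorial : ℕ) : ℝ) := by exact_mod_cast h1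
              _ = (t.factorial : ℝ) * ((t-1).factorial : ℝ) := by push_cast; ring
              _ ≤ Real.exp 1 ^ 2 * (((2*t : ℕ):ℝ) / (2 * Real.exp 1))^(2*t) := h2
          · obtain ⟨t, ht⟩ := ho
            rw [ht]
            rcases Nat.eq_zero_or_pos t with ht0 | ht1
            · subst ht0
              have h1 := CycAux.Lset_one_card H S (S.min' hSne)
              have h2 : ((CycAux.Lset H S (2*0+1) (S.min' hSne)).card : ℝ) ≤ 1 := by
                exact_mod_cast h1
              refine h2.trans ?_
              have e1 : Real.exp 1 ^ 2 * (((2*0+1 : ℕ):ℝ) / (2 * Real.exp 1))^(2*0+1)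
                  = Real.exp 1 / 2 := by
                push_cast
                field_simp
              rw [e1]
              linarith
            · have h1 := CycAux.Lset_card_odd (a := S.min' hSne) htf (t := t) ht
              have h2 := CycAux.odd_real t ht1
              calc ((CycAux.Lset H S (2*t+1) (S.min' hSne)).card : ℝ)
                  ≤ ((t.factorial ^ 2 : ℕ) : ℝ) := by exact_mod_cast h1
                _ = ((t.factorial : ℝ))^2 := by push_cast; ring
                _ ≤ Real.exp 1 ^ 2 * (((2*t+1 : ℕ):ℝ) / (2 * Real.exp 1))^(2*t+1) := h2
        · rw [dif_neg hSne]
          simp only [Finset.card_empty, Nat.cast_zero]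
          positivity
      have hsum1 : (G.card : ℝ) ≤ ∑ S ∈ Finset.univ.powerset,
          (((if h : S.Nonempty then CycAux.Lset H S S.card (S.min' h) else ∅) :
            Finset (List V)).card : ℝ) := by
        rw [hG]
        have h := Finset.card_biUnion_le (s := (Finset.univ : Finset V).powerset)
          (t := fun S => if h : S.Nonempty then CycAux.Lset H S S.card (S.min' h) else ∅)
        push_cast
        exact_mod_cast h
      have hsum2 : ∑ S ∈ Finset.univ.powerset,
          (((if h : S.Nonempty then CycAux.Lset H S S.card (S.min' h) else ∅) :
            Finset (List V)).card : ℝ)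
          ≤ ∑ S ∈ Finset.univ.powerset, Real.exp 1 ^ 2 * ((m:ℝ)/(2*Real.exp 1))^(S.card) :=
        Finset.sum_le_sum hperS
      have hsum3 : ∑ S ∈ (Finset.univ : Finset V).powerset,
          Real.exp 1 ^ 2 * ((m:ℝ)/(2*Real.exp 1))^(S.card)
          = ∑ j ∈ Finset.range (m+1), (m.choose j) •
              (Real.exp 1 ^ 2 * ((m:ℝ)/(2*Real.exp 1))^j) := by
        have h := Finset.sum_powerset_apply_card
          (f := fun j => Real.exp 1 ^ 2 * ((m:ℝ)/(2*Real.exp 1))^j)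
          (x := (Finset.univ : Finset V))
        rw [Finset.card_univ, hcard] at h
        exact h
      have hbinom : ∑ j ∈ Finset.range (m+1), (m.choose j) •
            (Real.exp 1 ^ 2 * ((m:ℝ)/(2*Real.exp 1))^j)
          = Real.exp 1 ^ 2 * (1 + (m:ℝ)/(2*Real.exp 1))^m := by
        have h := add_pow ((m:ℝ)/(2*Real.exp 1)) 1 m
        have e1 : (1 + (m:ℝ)/(2*Real.exp 1)) = ((m:ℝ)/(2*Real.exp 1) + 1) := by ring
        rw [e1, h, Finset.mul_sum]
        apply Finset.sum_congr rfl
        intro j hj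
        rw [nsmul_eq_mul]
        ring
      calc (cycleCount H : ℝ) ≤ (G.card : ℝ) := hcount
        _ ≤ _ := hsum1
        _ ≤ _ := hsum2
        _ = _ := hsum3
        _ = _ := hbinom

end Main
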